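/- Let u = (3+√5)/2 and Δ_n = N_{ℚ(√5)/ℚ}(u^n - 1). Then among n ∈ {2,...,12}, the terms without a primitive prime divisor are exactly Δ_6 = -320, Δ_{10} = -15125, and Δ_{12} = -103680. -/

import Mathlib

open NumberField

/-- For `u = (3+√5)/2`, a unit of the ring of integers of `ℚ(√5)`, and
`Δ_n = N_{ℚ(√5)/ℚ}(u^n - 1)`: among `n ∈ {2,…,12}` the terms without a primitive prime
divisor are exactly `Δ_6 = -320`, `Δ_10 = -15125` and `Δ_12 = -103680`. -/
theorem lehmerPierce_three_add_sqrt_five_div_two (K : Type*) [Field K] [NumberField K]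
    (hdeg : Module.finrank ℚ K = 2) (σ : K →+* ℝ)
    (α : RingOfIntegers K) (hα : σ (α : K) = (3 + Real.sqrt 5) / 2)
    (Δ : ℕ → ℤ) (hΔ : ∀ n : ℕ, Δ n = Algebra.norm ℤ (α ^ n - 1)) :
    Δ 6 = -320 ∧ Δ 10 = -15125 ∧ Δ 12 = -103680 ∧
      ∀ n : ℕ, 2 ≤ n → n ≤ 12 →
        ((¬ ∃ p : ℕ, p.Prime ∧ (p : ℤ) ∣ Δ n ∧
            ∀ m : ℕ, 0 < m → m < n → Δ m ≠ 0 → ¬ (p : ℤ) ∣ Δ m) ↔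
          (n = 6 ∨ n = 10 ∨ n = 12)) := by
  have h5 : Real.sqrt 5 ^ 2 = 5 := Real.sq_sqrt (by norm_num)
  have hirr : Irrational (Real.sqrt 5) := (by norm_num : Nat.Prime 5).irrational_sqrt
  -- quadratic relation in K
  have hK : (α : K) ^ 2 = 3 * (α : K) - 1 := by
    apply σ.injective
    rw [map_sub, map_mul, map_pow, map_one, map_ofNat, hα]
    linear_combination h5 / 4
  -- α not rational
  have hnr : ∀ r : ℚ, (α : K) ≠ (r : K) := by
    intro r h
    have h2 : σ (α : K) = (r : ℝ) := by rw [h, map_ratCast]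
    apply hirr
    refine ⟨2 * r - 3, ?_⟩
    rw [hα] at h2
    push_cast
    linarith
  -- linear independence
  have li : LinearIndependent ℚ ![(1 : K), (α : K)] := by
    rw [LinearIndependent.pair_iff]
    intro s t hst
    have hst' : (s : K) + (t : K) * α = 0 := by
      simpa [Algebra.smul_def, eq_ratCast] using hst
    rcases eq_or_ne t 0 with rfl | ht
    · have hs : (s : K) = 0 := by simpa using hst'
      exact ⟨by exact_mod_cast hs, rfl⟩
    · exfalso
      apply hnr (-s / t)
      have ht' : (t : K) ≠ 0 := by exact_mod_cast ht
      push_cast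
      field_simp
      linear_combination hst'
  -- basis
  have cardeq : Fintype.card (Fin 2) = Module.finrank ℚ K := by simp [hdeg]
  set b : Module.Basis (Fin 2) ℚ K := basisOfLinearIndependentOfCardEqFinrank li cardeq with hbdef
  have hb : ⇑b = ![(1 : K), (α : K)] := coe_basisOfLinearIndependentOfCardEqFinrank li cardeq
  have hb0 : b 0 = 1 := by rw [hb]; rfl
  have hb1 : b 1 = (α : K) := by rw [hb]; rfl
  have hrepr : ∀ u v : ℚ, b.repr (u • b 0 + v • b 1) = Finsupp.single 0 u + Finsupp.single 1 v := by
    intro u v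
    rw [map_add, map_smul, map_smul, Module.Basis.repr_self, Module.Basis.repr_self,
      Finsupp.smul_single, Finsupp.smul_single, smul_eq_mul, smul_eq_mul, mul_one, mul_one]
  have hnorm : ∀ u v : ℚ, Algebra.norm ℚ ((u : K) + (v : K) * (α : K)) = u^2 + 3*u*v + v^2 := by
    intro u v
    rw [Algebra.norm_eq_matrix_det b, Matrix.det_fin_two]
    have e0 : ((u : K) + (v : K) * (α : K)) * b 0 = u • b 0 + v • b 1 := by
      rw [hb0, hb1, mul_one, Algebra.smul_def, Algebra.smul_def, eq_ratCast, eq_ratCast]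
      ring
    have e1 : ((u : K) + (v : K) * (α : K)) * b 1 = (-v) • b 0 + (u + 3*v) • b 1 := by
      rw [hb0, hb1, Algebra.smul_def, Algebra.smul_def, eq_ratCast, eq_ratCast]
      push_cast
      linear_combination (v : K) * hK
    rw [Algebra.leftMulMatrix_eq_repr_mul, Algebra.leftMulMatrix_eq_repr_mul,
      Algebra.leftMulMatrix_eq_repr_mul, Algebra.leftMulMatrix_eq_repr_mul,
      e0, e1, hrepr, hrepr]
    simp [Finsupp.single_apply]
    ring
  -- integer norm formula
  have hNZ : ∀ (u v : ℤ) (x : 𝓞 K), (x : K) = (u : K) + (v : K) * (α : K) →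
      Algebra.norm ℤ x = u ^ 2 + 3 * u * v + v ^ 2 := by
    intro u v x hx
    have hx' : (x : K) = ((u : ℚ) : K) + ((v : ℚ) : K) * (α : K) := by rw [hx]; push_cast; ring
    have := Algebra.coe_norm_int x
    rw [hx', hnorm] at this
    exact_mod_cast this
  -- quadratic relation in the ring of integers
  have hO : α ^ 2 = 3 * α - 1 := by
    apply RingOfIntegers.coe_injective
    push_cast
    exact hK
  have p1 : α ^ 1 = 0 + 1 * α := by ring
  have p2 : α ^ 2 = (-1) + 3 * α := by linear_combination hO
  have p3 : α ^ 3 = (-3) + 8 * α := by linear_combination α * p2 + (3) * p2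
  have p4 : α ^ 4 = (-8) + 21 * α := by linear_combination α * p3 + (8) * p2
  have p5 : α ^ 5 = (-21) + 55 * α := by linear_combination α * p4 + (21) * p2
  have p6 : α ^ 6 = (-55) + 144 * α := by linear_combination α * p5 + (55) * p2
  have p7 : α ^ 7 = (-144) + 377 * α := by linear_combination α * p6 + (144) * p2
  have p8 : α ^ 8 = (-377) + 987 * α := by linear_combination α * p7 + (377) * p2
  have p9 : α ^ 9 = (-987) + 2584 * α := by linear_combination α * p8 + (987) * p2
  have p10 : α ^ 10 = (-2584) + 6765 * α := by linear_combination α * p9 + (2584) * p2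
  have p11 : α ^ 11 = (-6765) + 17711 * α := by linear_combination α * p10 + (6765) * p2
  have p12 : α ^ 12 = (-17711) + 46368 * α := by linear_combination α * p11 + (17711) * p2
  have dval : ∀ (n : ℕ) (u v : ℤ), α ^ n = (u : 𝓞 K) + (v : 𝓞 K) * α →
      Δ n = (u - 1) ^ 2 + 3 * (u - 1) * v + v ^ 2 := by
    intro n u v h
    have cast_int : ∀ m : ℤ, ((m : 𝓞 K) : K) = (m : K) := fun m => map_intCast (algebraMap (𝓞 K) K) m
    rw [hΔ, hNZ (u - 1) v (α ^ n - 1) (by push_cast [h, cast_int]; ring)]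
  have D1 : Δ 1 = (-1) := by rw [dval 1 (0) (1) (by push_cast; linear_combination p1)]; norm_num
  have D2 : Δ 2 = (-5) := by rw [dval 2 (-1) (3) (by push_cast; linear_combination p2)]; norm_num
  have D3 : Δ 3 = (-16) := by rw [dval 3 (-3) (8) (by push_cast; linear_combination p3)]; norm_num
  have D4 : Δ 4 = (-45) := by rw [dval 4 (-8) (21) (by push_cast; linear_combination p4)]; norm_num
  have D5 : Δ 5 = (-121) := by rw [dval 5 (-21) (55) (by push_cast; linear_combination p5)]; norm_num
  have D6 : Δ 6 = (-320) := by rw [dval 6 (-55) (144) (by push_cast; linear_combination p6)]; norm_num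
  have D7 : Δ 7 = (-841) := by rw [dval 7 (-144) (377) (by push_cast; linear_combination p7)]; norm_num
  have D8 : Δ 8 = (-2205) := by rw [dval 8 (-377) (987) (by push_cast; linear_combination p8)]; norm_num
  have D9 : Δ 9 = (-5776) := by rw [dval 9 (-987) (2584) (by push_cast; linear_combination p9)]; norm_num
  have D10 : Δ 10 = (-15125) := by rw [dval 10 (-2584) (6765) (by push_cast; linear_combination p10)]; norm_num
  have D11 : Δ 11 = (-39601) := by rw [dval 11 (-6765) (17711) (by push_cast; linear_combination p11)]; norm_num
  have D12 : Δ 12 = (-103680) := by rw [dval 12 (-17711) (46368) (by push_cast; linear_combination p12)]; norm_num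
  refine ⟨D6, D10, D12, ?_⟩
  intro n hn2 hn12
  interval_cases n
  · refine iff_of_false (not_not_intro ⟨5, by norm_num, ?_, ?_⟩) (by omega)
    · rw [D2]; decide
    · intro m hm1 hm2 _
      interval_cases m <;>
        simp only [D1, D2, D3, D4, D5, D6, D7, D8, D9, D10, D11] <;> decide
  · refine iff_of_false (not_not_intro ⟨2, by norm_num, ?_, ?_⟩) (by omega)
    · rw [D3]; decide
    · intro m hm1 hm2 _
      interval_cases m <;>
        simp only [D1, D2, D3, D4, D5, D6, D7, D8, D9, D10, D11] <;> decide
  · refine iff_of_false (not_not_intro ⟨3, by norm_num, ?_, ?_⟩) (by omega)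
    · rw [D4]; decide
    · intro m hm1 hm2 _
      interval_cases m <;>
        simp only [D1, D2, D3, D4, D5, D6, D7, D8, D9, D10, D11] <;> decide
  · refine iff_of_false (not_not_intro ⟨11, by norm_num, ?_, ?_⟩) (by omega)
    · rw [D5]; decide
    · intro m hm1 hm2 _
      interval_cases m <;>
        simp only [D1, D2, D3, D4, D5, D6, D7, D8, D9, D10, D11] <;> decide
  · refine iff_of_true ?_ (by omega)
    rintro ⟨p, hp, hdvd, hprim⟩
    rw [D6] at hdvd
    have hpn : p ∣ 320 := by
      have h1 : (p : ℤ) ∣ 320 := (dvd_neg).mp hdvd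
      exact_mod_cast h1
    rw [show (320 : ℕ) = 2 ^ 6 * 5 ^ 1 by norm_num] at hpn
    rcases (Nat.Prime.dvd_mul hp).mp hpn with h | h
    · have hp2 : p = 2 := (Nat.prime_dvd_prime_iff_eq hp Nat.prime_two).mp (hp.dvd_of_dvd_pow h)
      subst hp2
      exact hprim 3 (by norm_num) (by norm_num) (by rw [D3]; decide) (by rw [D3]; decide)
    · have hp5 : p = 5 := (Nat.prime_dvd_prime_iff_eq hp (by norm_num)).mp (hp.dvd_of_dvd_pow h)
      subst hp5
      exact hprim 2 (by norm_num) (by norm_num) (by rw [D2]; decide) (by rw [D2]; decide)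
  · refine iff_of_false (not_not_intro ⟨29, by norm_num, ?_, ?_⟩) (by omega)
    · rw [D7]; decide
    · intro m hm1 hm2 _
      interval_cases m <;>
        simp only [D1, D2, D3, D4, D5, D6, D7, D8, D9, D10, D11] <;> decide
  · refine iff_of_false (not_not_intro ⟨7, by norm_num, ?_, ?_⟩) (by omega)
    · rw [D8]; decide
    · intro m hm1 hm2 _
      interval_cases m <;>
        simp only [D1, D2, D3, D4, D5, D6, D7, D8, D9, D10, D11] <;> decide
  · refine iff_of_false (not_not_intro ⟨19, by norm_num, ?_, ?_⟩) (by omega)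
    · rw [D9]; decide
    · intro m hm1 hm2 _
      interval_cases m <;>
        simp only [D1, D2, D3, D4, D5, D6, D7, D8, D9, D10, D11] <;> decide
  · refine iff_of_true ?_ (by omega)
    rintro ⟨p, hp, hdvd, hprim⟩
    rw [D10] at hdvd
    have hpn : p ∣ 15125 := by
      have h1 : (p : ℤ) ∣ 15125 := (dvd_neg).mp hdvd
      exact_mod_cast h1
    rw [show (15125 : ℕ) = 5 ^ 3 * 11 ^ 2 by norm_num] at hpn
    rcases (Nat.Prime.dvd_mul hp).mp hpn with h | h
    · have hp5 : p = 5 := (Nat.prime_dvd_prime_iff_eq hp (by norm_num)).mp (hp.dvd_of_dvd_pow h)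
      subst hp5
      exact hprim 2 (by norm_num) (by norm_num) (by rw [D2]; decide) (by rw [D2]; decide)
    · have hp11 : p = 11 := (Nat.prime_dvd_prime_iff_eq hp (by norm_num)).mp (hp.dvd_of_dvd_pow h)
      subst hp11
      exact hprim 5 (by norm_num) (by norm_num) (by rw [D5]; decide) (by rw [D5]; decide)
  · refine iff_of_false (not_not_intro ⟨199, by norm_num, ?_, ?_⟩) (by omega)
    · rw [D11]; decide
    · intro m hm1 hm2 _
      interval_cases m <;>
        simp only [D1, D2, D3, D4, D5, D6, D7, D8, D9, D10, D11] <;> decide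
  · refine iff_of_true ?_ (by omega)
    rintro ⟨p, hp, hdvd, hprim⟩
    rw [D12] at hdvd
    have hpn : p ∣ 103680 := by
      have h1 : (p : ℤ) ∣ 103680 := (dvd_neg).mp hdvd
      exact_mod_cast h1
    rw [show (103680 : ℕ) = 2 ^ 8 * 3 ^ 4 * 5 ^ 1 by norm_num] at hpn
    rcases (Nat.Prime.dvd_mul hp).mp hpn with h | h
    · rcases (Nat.Prime.dvd_mul hp).mp h with h' | h'
      · have hp2 : p = 2 := (Nat.prime_dvd_prime_iff_eq hp Nat.prime_two).mp (hp.dvd_of_dvd_pow h')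
        subst hp2
        exact hprim 3 (by norm_num) (by norm_num) (by rw [D3]; decide) (by rw [D3]; decide)
      · have hp3 : p = 3 := (Nat.prime_dvd_prime_iff_eq hp Nat.prime_three).mp (hp.dvd_of_dvd_pow h')
        subst hp3
        exact hprim 4 (by norm_num) (by norm_num) (by rw [D4]; decide) (by rw [D4]; decide)
    · have hp5 : p = 5 := (Nat.prime_dvd_prime_iff_eq hp (by norm_num)).mp (hp.dvd_of_dvd_pow h)
      subst hp5
      exact hprim 2 (by norm_num) (by norm_num) (by rw [D2]; decide) (by rw [D2]; decide)
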